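/- Let k₁,…,kₙ ≥ 0, N = n + 2∑kⱼ, and μ the measure on ℝⁿ with density ∏ⱼ|xⱼ|^{2kⱼ}. Then for every x ∈ ℝⁿ and 0 < r ≤ R, (R/r)^n ≲ μ(B(x,R))/μ(B(x,r)) ≲ (R/r)^N, with implied constants independent of x, r, R. -/

import Mathlib

open Real MeasureTheory Set Metric

/-- The product Dunkl measure `∏ⱼ |xⱼ|^{2kⱼ} dx` on `ℝⁿ`. -/
noncomputable def dunklMeasure (n : ℕ) (k : Fin n → ℝ) : Measure (EuclideanSpace ℝ (Fin n)) :=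
  volume.withDensity (fun x => ∏ j, ENNReal.ofReal (|x j| ^ (2 * k j)))

/-- the constant in the lower volume bound -/
noncomputable def dunklC₀ (n : ℕ) (k : Fin n → ℝ) : ℝ :=
  (4 * Real.sqrt n)⁻¹ ^ n * ∏ j, ((4 * Real.sqrt n)⁻¹) ^ (2 * k j)

lemma dunklC₀_pos (n : ℕ) (k : Fin n → ℝ) : 0 < dunklC₀ n k := by
  rcases Nat.eq_zero_or_pos n with h | h
  · subst h; simp [dunklC₀]
  · have hn : (0 : ℝ) < n := by exact_mod_cast h
    have hs : 0 < Real.sqrt n := Real.sqrt_pos.mpr hn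
    have h4 : (0 : ℝ) < (4 * Real.sqrt n)⁻¹ := by positivity
    exact mul_pos (pow_pos h4 n)
      (Finset.prod_pos fun j _ => Real.rpow_pos_of_pos h4 _)

lemma dunkl_upper (n : ℕ) (k : Fin n → ℝ) (hk : ∀ j, 0 ≤ k j)
    (x : EuclideanSpace ℝ (Fin n)) {R : ℝ} (hR : 0 ≤ R) :
    dunklMeasure n k (Metric.closedBall x R) ≤
      ENNReal.ofReal ((volume (Metric.closedBall (0 : EuclideanSpace ℝ (Fin n)) 1)).toReal *
        (R ^ n * ∏ j, (|x j| + R) ^ (2 * k j))) := by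
  have hcoord : ∀ y ∈ Metric.closedBall x R, ∀ j, |y j| ≤ |x j| + R := by
    intro y hy j
    have h1 : |y j - x j| ≤ dist y x := by
      rw [EuclideanSpace.dist_eq, ← Real.sqrt_sq_eq_abs]
      apply Real.sqrt_le_sqrt
      have := Finset.single_le_sum (f := fun i => dist (y i) (x i) ^ 2)
        (fun i _ => sq_nonneg _) (Finset.mem_univ j)
      simpa [Real.dist_eq] using this
    have h2 : dist y x ≤ R := Metric.mem_closedBall.mp hy
    have h3 : |y j| ≤ |x j| + |y j - x j| := by
      have := abs_add_le (x j) (y j - x j)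
      simpa using this
    linarith
  have hprod_nonneg : 0 ≤ ∏ j, (|x j| + R) ^ (2 * k j) :=
    Finset.prod_nonneg fun j _ => Real.rpow_nonneg (by positivity) _
  rw [dunklMeasure, withDensity_apply _ measurableSet_closedBall]
  calc ∫⁻ y in Metric.closedBall x R, ∏ j, ENNReal.ofReal (|y j| ^ (2 * k j)) ∂volume
      ≤ ∫⁻ _ in Metric.closedBall x R,
          ENNReal.ofReal (∏ j, (|x j| + R) ^ (2 * k j)) ∂volume := by
        apply setLIntegral_mono' measurableSet_closedBall
        intro y hy
        rw [ENNReal.ofReal_prod_of_nonneg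
          (fun j _ => Real.rpow_nonneg (by positivity) _)]
        refine Finset.prod_le_prod' fun j _ => ENNReal.ofReal_le_ofReal ?_
        exact Real.rpow_le_rpow (abs_nonneg _) (hcoord y hy j)
          (by have := hk j; linarith)
    _ = ENNReal.ofReal (∏ j, (|x j| + R) ^ (2 * k j)) *
          volume (Metric.closedBall x R) := setLIntegral_const _ _
    _ = ENNReal.ofReal (∏ j, (|x j| + R) ^ (2 * k j)) *
          (ENNReal.ofReal (R ^ n) *
            volume (Metric.closedBall (0 : EuclideanSpace ℝ (Fin n)) 1)) := by
        rw [Measure.addHaar_closedBall' _ _ hR, finrank_euclideanSpace_fin]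
    _ = ENNReal.ofReal ((volume (Metric.closedBall (0 : EuclideanSpace ℝ (Fin n)) 1)).toReal *
          (R ^ n * ∏ j, (|x j| + R) ^ (2 * k j))) := by
        rw [ENNReal.ofReal_mul (ENNReal.toReal_nonneg),
          ENNReal.ofReal_mul (by positivity),
          ENNReal.ofReal_toReal measure_closedBall_lt_top.ne]
        ring

lemma dunkl_lower (n : ℕ) (k : Fin n → ℝ) (hk : ∀ j, 0 ≤ k j)
    (x : EuclideanSpace ℝ (Fin n)) {R : ℝ} (hR : 0 < R) :
    ENNReal.ofReal (dunklC₀ n k * (R ^ n * ∏ j, (|x j| + R) ^ (2 * k j))) ≤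
      dunklMeasure n k (Metric.closedBall x R) := by
  set s := Real.sqrt n with hs
  have hs0 : 0 ≤ s := Real.sqrt_nonneg _
  set δ := R / (2 * s) with hδ
  have hδ0 : 0 ≤ δ := by positivity
  set b : Fin n → ℝ := fun j => x j + (if 0 ≤ x j then 1 else -1) * (3 * δ / 4) with hb
  set I : Fin n → Set ℝ := fun j => Icc (b j - δ / 4) (b j + δ / 4) with hI
  set Q : Set (EuclideanSpace ℝ (Fin n)) :=
    (MeasurableEquiv.toLp 2 (Fin n → ℝ)).symm ⁻¹' (Set.pi Set.univ I) with hQ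
  have hQmem : ∀ y : EuclideanSpace ℝ (Fin n), y ∈ Q ↔ ∀ j, y j ∈ I j := by
    intro y
    constructor
    · intro hy j; exact hy j (Set.mem_univ j)
    · intro hy j _; exact hy j
  have hQmeas : MeasurableSet Q :=
    (MeasurableEquiv.toLp 2 (Fin n → ℝ)).symm.measurable
      (MeasurableSet.univ_pi fun j => measurableSet_Icc)
  have key : ∀ y ∈ Q, ∀ j, (|x j| + δ) / 2 ≤ |y j| ∧ |y j - x j| ≤ δ := by
    intro y hy j
    have hyj := (hQmem y).1 hy j
    rw [hI, Set.mem_Icc] at hyj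
    obtain ⟨h1, h2⟩ := hyj
    have hy1 : y j ≤ |y j| := le_abs_self _
    have hy2 : -y j ≤ |y j| := neg_le_abs _
    by_cases hxj : 0 ≤ x j
    · simp only [hb, if_pos hxj] at h1 h2
      rw [abs_of_nonneg hxj]
      constructor
      · linarith
      · rw [abs_le]; constructor <;> linarith
    · simp only [hb, if_neg hxj] at h1 h2
      push_neg at hxj
      rw [abs_of_neg hxj]
      constructor
      · linarith
      · rw [abs_le]; constructor <;> linarith
  have hsδ : s * δ ≤ R := by
    rcases eq_or_lt_of_le hs0 with h0 | h0
    · rw [← h0]; simpa using hR.le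
    · rw [hδ, show s * (R / (2 * s)) = R / 2 by field_simp]
      linarith
  have hQsub : Q ⊆ Metric.closedBall x R := by
    intro y hy
    rw [Metric.mem_closedBall, EuclideanSpace.dist_eq]
    have h1 : ∀ j, dist (y j) (x j) ^ 2 ≤ δ ^ 2 := by
      intro j
      have habs : |y j - x j| ≤ δ := (key y hy j).2
      rw [Real.dist_eq]
      nlinarith [abs_nonneg (y j - x j)]
    have h2 : ∑ j, dist (y j) (x j) ^ 2 ≤ (n : ℝ) * δ ^ 2 := by
      calc ∑ j, dist (y j) (x j) ^ 2 ≤ ∑ _j : Fin n, δ ^ 2 :=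
            Finset.sum_le_sum fun j _ => h1 j
        _ = (n : ℝ) * δ ^ 2 := by
            rw [Finset.sum_const, Finset.card_univ, Fintype.card_fin, nsmul_eq_mul]
    calc Real.sqrt (∑ j, dist (y j) (x j) ^ 2) ≤ Real.sqrt ((n : ℝ) * δ ^ 2) :=
          Real.sqrt_le_sqrt h2
      _ = s * δ := by
          rw [Real.sqrt_mul (Nat.cast_nonneg n), Real.sqrt_sq hδ0]
      _ ≤ R := hsδ
  have hvolQ : volume Q = ENNReal.ofReal ((δ / 2) ^ n) := by
    rw [hQ, (EuclideanSpace.volume_preserving_symm_measurableEquiv_toLp (Fin n)).measure_preimage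
      ((MeasurableSet.univ_pi fun j => measurableSet_Icc).nullMeasurableSet)]
    rw [volume_pi_pi]
    have : ∀ j : Fin n, volume (I j) = ENNReal.ofReal (δ / 2) := by
      intro j
      rw [hI, Real.volume_Icc]
      congr 1
      ring
    rw [show (∏ i, volume (Icc (b i - δ / 4) (b i + δ / 4))) = ∏ _i : Fin n, ENNReal.ofReal (δ / 2) from
      Finset.prod_congr rfl fun j _ => this j]
    rw [Finset.prod_const, Finset.card_univ, Fintype.card_fin,
      ← ENNReal.ofReal_pow (by positivity)]
  have hμQ : ENNReal.ofReal ((∏ j, ((|x j| + δ) / 2) ^ (2 * k j)) * (δ / 2) ^ n) ≤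
      dunklMeasure n k Q := by
    have hprod_nonneg : 0 ≤ ∏ j, ((|x j| + δ) / 2) ^ (2 * k j) :=
      Finset.prod_nonneg fun j _ => Real.rpow_nonneg (by positivity) _
    rw [dunklMeasure, withDensity_apply _ hQmeas]
    calc ENNReal.ofReal ((∏ j, ((|x j| + δ) / 2) ^ (2 * k j)) * (δ / 2) ^ n)
        = ENNReal.ofReal (∏ j, ((|x j| + δ) / 2) ^ (2 * k j)) *
            ENNReal.ofReal ((δ / 2) ^ n) := ENNReal.ofReal_mul hprod_nonneg
      _ = ∫⁻ _ in Q, ENNReal.ofReal (∏ j, ((|x j| + δ) / 2) ^ (2 * k j)) ∂volume := by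
          rw [setLIntegral_const, hvolQ]
      _ ≤ ∫⁻ y in Q, ∏ j, ENNReal.ofReal (|y j| ^ (2 * k j)) ∂volume := by
          apply setLIntegral_mono' hQmeas
          intro y hy
          rw [ENNReal.ofReal_prod_of_nonneg
            (fun j _ => Real.rpow_nonneg (by positivity) _)]
          refine Finset.prod_le_prod' fun j _ => ENNReal.ofReal_le_ofReal ?_
          exact Real.rpow_le_rpow (by positivity) ((key y hy j).1)
            (by have := hk j; linarith)
  have hreal : dunklC₀ n k * (R ^ n * ∏ j, (|x j| + R) ^ (2 * k j)) ≤
      (∏ j, ((|x j| + δ) / 2) ^ (2 * k j)) * (δ / 2) ^ n := by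
    rcases Nat.eq_zero_or_pos n with h | h
    · subst h
      simp [dunklC₀]
    · have hn1 : (1 : ℝ) ≤ n := by exact_mod_cast h
      have hs1 : 1 ≤ s := by
        rw [hs, show (1 : ℝ) = Real.sqrt 1 by rw [Real.sqrt_one]]
        exact Real.sqrt_le_sqrt hn1
      have hspos : 0 < s := by linarith
      have hs' : s ≠ 0 := ne_of_gt hspos
      have hδ2 : δ / 2 = R * (4 * s)⁻¹ := by
        rw [hδ, div_div, show (2 : ℝ) * s * 2 = 4 * s by ring, div_eq_mul_inv]
      have hfac : ∀ j, ((|x j| + R) * (4 * s)⁻¹) ^ (2 * k j) ≤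
          ((|x j| + δ) / 2) ^ (2 * k j) := by
        intro j
        apply Real.rpow_le_rpow (by positivity) _ (by have := hk j; linarith)
        have hself : |x j| / (2 * s) ≤ |x j| :=
          div_le_self (abs_nonneg _) (by linarith)
        have heq : (|x j| + R) * (4 * s)⁻¹ = (|x j| / (2 * s) + δ) / 2 := by
          rw [hδ, ← add_div, div_div, show (2 : ℝ) * s * 2 = 4 * s by ring,
            div_eq_mul_inv]
        rw [heq]
        linarith
    -- rewrite LHS
      have hLHS : dunklC₀ n k * (R ^ n * ∏ j, (|x j| + R) ^ (2 * k j)) =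
          (R * (4 * s)⁻¹) ^ n * ∏ j, ((|x j| + R) * (4 * s)⁻¹) ^ (2 * k j) := by
        rw [dunklC₀, ← hs]
        rw [mul_pow]
        have : ∀ j ∈ Finset.univ, ((|x j| + R) * (4 * s)⁻¹) ^ (2 * k j) =
            (|x j| + R) ^ (2 * k j) * ((4 * s)⁻¹) ^ (2 * k j) :=
          fun j _ => Real.mul_rpow (by positivity) (by positivity)
        rw [Finset.prod_congr rfl this, Finset.prod_mul_distrib]
        ring
      rw [hLHS, ← hδ2]
      have h1 : ∏ j, ((|x j| + R) * (4 * s)⁻¹) ^ (2 * k j) ≤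
          ∏ j, ((|x j| + δ) / 2) ^ (2 * k j) :=
        Finset.prod_le_prod
          (fun j _ => Real.rpow_nonneg (by positivity) _)
          (fun j _ => hfac j)
      have h2 : (0 : ℝ) ≤ (δ / 2) ^ n := by positivity
      calc (δ / 2) ^ n * ∏ j, ((|x j| + R) * (4 * s)⁻¹) ^ (2 * k j)
          ≤ (δ / 2) ^ n * ∏ j, ((|x j| + δ) / 2) ^ (2 * k j) :=
            mul_le_mul_of_nonneg_left h1 h2
        _ = (∏ j, ((|x j| + δ) / 2) ^ (2 * k j)) * (δ / 2) ^ n := mul_comm _ _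
  calc ENNReal.ofReal (dunklC₀ n k * (R ^ n * ∏ j, (|x j| + R) ^ (2 * k j)))
      ≤ ENNReal.ofReal ((∏ j, ((|x j| + δ) / 2) ^ (2 * k j)) * (δ / 2) ^ n) :=
        ENNReal.ofReal_le_ofReal hreal
    _ ≤ dunklMeasure n k Q := hμQ
    _ ≤ dunklMeasure n k (Metric.closedBall x R) := measure_mono hQsub

theorem measure_ball_ratio (n : ℕ) (k : Fin n → ℝ) (hk : ∀ j, 0 ≤ k j) :
    ∃ c > 0, ∃ C > 0, ∀ x : EuclideanSpace ℝ (Fin n), ∀ r R : ℝ, 0 < r → r ≤ R →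
      ENNReal.ofReal (c * (R / r) ^ (n : ℝ)) * dunklMeasure n k (Metric.closedBall x r) ≤
        dunklMeasure n k (Metric.closedBall x R) ∧
      dunklMeasure n k (Metric.closedBall x R) ≤
        ENNReal.ofReal (C * (R / r) ^ ((n : ℝ) + ∑ j, 2 * k j)) *
          dunklMeasure n k (Metric.closedBall x r) := by
  set V := (volume (Metric.closedBall (0 : EuclideanSpace ℝ (Fin n)) 1)).toReal with hV
  have hV0 : 0 < V :=
    ENNReal.toReal_pos (measure_closedBall_pos _ _ one_pos).ne' measure_closedBall_lt_top.ne
  have hc₀ := dunklC₀_pos n k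
  refine ⟨dunklC₀ n k / V, by positivity, V / dunklC₀ n k, by positivity, ?_⟩
  intro x r R hr hrR
  have hR : 0 < R := hr.trans_le hrR
  have hdiv : 0 < R / r := div_pos hR hr
  have hup_r := dunkl_upper n k hk x hr.le
  have hlow_r := dunkl_lower n k hk x hr
  have hup_R := dunkl_upper n k hk x hR.le
  have hlow_R := dunkl_lower n k hk x hR
  have hprod_r_nonneg : 0 ≤ ∏ j, (|x j| + r) ^ (2 * k j) :=
    Finset.prod_nonneg fun j _ => Real.rpow_nonneg (by positivity) _
  have hprod : ∏ j, (|x j| + r) ^ (2 * k j) ≤ ∏ j, (|x j| + R) ^ (2 * k j) :=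
    Finset.prod_le_prod (fun j _ => Real.rpow_nonneg (by positivity) _)
      (fun j _ => Real.rpow_le_rpow (by positivity) (by linarith)
        (by have := hk j; linarith))
  constructor
  · have hreal1 : dunklC₀ n k / V * (R / r) ^ (n : ℝ) *
        (V * (r ^ n * ∏ j, (|x j| + r) ^ (2 * k j))) ≤
        dunklC₀ n k * (R ^ n * ∏ j, (|x j| + R) ^ (2 * k j)) := by
      have heq : dunklC₀ n k / V * (R / r) ^ (n : ℝ) *
          (V * (r ^ n * ∏ j, (|x j| + r) ^ (2 * k j))) =
          dunklC₀ n k * (R ^ n * ∏ j, (|x j| + r) ^ (2 * k j)) := by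
        rw [Real.rpow_natCast, div_pow]
        field_simp
      rw [heq]
      exact mul_le_mul_of_nonneg_left
        (mul_le_mul_of_nonneg_left hprod (by positivity)) hc₀.le
    calc ENNReal.ofReal (dunklC₀ n k / V * (R / r) ^ (n : ℝ)) *
          dunklMeasure n k (Metric.closedBall x r)
        ≤ ENNReal.ofReal (dunklC₀ n k / V * (R / r) ^ (n : ℝ)) *
            ENNReal.ofReal (V * (r ^ n * ∏ j, (|x j| + r) ^ (2 * k j))) :=
          mul_le_mul_right hup_r _
      _ = ENNReal.ofReal (dunklC₀ n k / V * (R / r) ^ (n : ℝ) *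
            (V * (r ^ n * ∏ j, (|x j| + r) ^ (2 * k j)))) :=
          (ENNReal.ofReal_mul (by positivity)).symm
      _ ≤ ENNReal.ofReal (dunklC₀ n k * (R ^ n * ∏ j, (|x j| + R) ^ (2 * k j))) :=
          ENNReal.ofReal_le_ofReal hreal1
      _ ≤ dunklMeasure n k (Metric.closedBall x R) := hlow_R
  · have hreal2 : V * (R ^ n * ∏ j, (|x j| + R) ^ (2 * k j)) ≤
        V / dunklC₀ n k * (R / r) ^ ((n : ℝ) + ∑ j, 2 * k j) *
          (dunklC₀ n k * (r ^ n * ∏ j, (|x j| + r) ^ (2 * k j))) := by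
      have hsplit : (R / r) ^ ((n : ℝ) + ∑ j, 2 * k j) =
          (R / r) ^ n * ∏ j, (R / r) ^ (2 * k j) := by
        rw [Real.rpow_add hdiv, Real.rpow_natCast,
          Real.rpow_sum_of_pos hdiv]
      have hfac : ∀ j ∈ Finset.univ, (|x j| + R) ^ (2 * k j) ≤
          (R / r) ^ (2 * k j) * (|x j| + r) ^ (2 * k j) := by
        intro j _
        rw [← Real.mul_rpow (le_of_lt hdiv) (by positivity)]
        apply Real.rpow_le_rpow (by positivity) _ (by have := hk j; linarith)
        rw [div_mul_eq_mul_div, le_div_iff₀ hr]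
        nlinarith [abs_nonneg (x j)]
      have hprodR : ∏ j, (|x j| + R) ^ (2 * k j) ≤
          (∏ j, (R / r) ^ (2 * k j)) * ∏ j, (|x j| + r) ^ (2 * k j) := by
        rw [← Finset.prod_mul_distrib]
        exact Finset.prod_le_prod
          (fun j _ => Real.rpow_nonneg (by positivity) _) hfac
      have hRn : R ^ n = (R / r) ^ n * r ^ n := by
        rw [div_pow]
        field_simp
      calc V * (R ^ n * ∏ j, (|x j| + R) ^ (2 * k j))
          ≤ V * (R ^ n * ((∏ j, (R / r) ^ (2 * k j)) *
              ∏ j, (|x j| + r) ^ (2 * k j))) := by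
            apply mul_le_mul_of_nonneg_left _ hV0.le
            exact mul_le_mul_of_nonneg_left hprodR (by positivity)
        _ = V / dunklC₀ n k * ((R / r) ^ n * ∏ j, (R / r) ^ (2 * k j)) *
              (dunklC₀ n k * (r ^ n * ∏ j, (|x j| + r) ^ (2 * k j))) := by
            rw [hRn]
            field_simp
        _ = V / dunklC₀ n k * (R / r) ^ ((n : ℝ) + ∑ j, 2 * k j) *
              (dunklC₀ n k * (r ^ n * ∏ j, (|x j| + r) ^ (2 * k j))) := by
            rw [hsplit]
    calc dunklMeasure n k (Metric.closedBall x R)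
        ≤ ENNReal.ofReal (V * (R ^ n * ∏ j, (|x j| + R) ^ (2 * k j))) := hup_R
      _ ≤ ENNReal.ofReal (V / dunklC₀ n k * (R / r) ^ ((n : ℝ) + ∑ j, 2 * k j) *
            (dunklC₀ n k * (r ^ n * ∏ j, (|x j| + r) ^ (2 * k j)))) :=
          ENNReal.ofReal_le_ofReal hreal2
      _ = ENNReal.ofReal (V / dunklC₀ n k * (R / r) ^ ((n : ℝ) + ∑ j, 2 * k j)) *
            ENNReal.ofReal (dunklC₀ n k * (r ^ n * ∏ j, (|x j| + r) ^ (2 * k j))) :=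
          ENNReal.ofReal_mul (by positivity)
      _ ≤ ENNReal.ofReal (V / dunklC₀ n k * (R / r) ^ ((n : ℝ) + ∑ j, 2 * k j)) *
            dunklMeasure n k (Metric.closedBall x r) :=
          mul_le_mul_right hlow_r _
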